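/- arXiv:math/9810183 — 3 statements merged into one kernel-verified Lean document; each statement's English description precedes it below -/
import Mathlib

section
/- Let γ : ℝ × ℝ → ℝ³ (parameters (s, t)) be C² with γ(0, t) = 0 for all t, ‖∂γ/∂s(s, t)‖ = 1 for all s, t (unit-speed in s), ∂γ/∂t(0, 0) = 0, and ∂²γ/∂s∂t(0, 0) = 0. Suppose all second and mixed partials are bounded by a constant M on [0, R] × {0}. Define r(s, t) = ‖γ(s, t) − γ(0, t)‖. Then there is a constant C depending only on M such that |∂r/∂t(R, 0)| ≤ C·R² for all 0 < R ≤ 1 with r(s, 0) ≥ s/2 on (0, R]. -/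
open Set RealInnerProductSpace

set_option maxHeartbeats 2000000

theorem chordal_distance_time_derivative_bound (M : ℝ) (hM : 0 < M) :
    ∃ C : ℝ, 0 < C ∧
      ∀ (γ : ℝ × ℝ → EuclideanSpace ℝ (Fin 3)) (R : ℝ),
        ContDiff ℝ 2 γ →
        (∀ t, γ (0, t) = 0) →
        (∀ s t, ‖deriv (fun s' => γ (s', t)) s‖ = 1) →
        deriv (fun t => γ (0, t)) 0 = 0 →
        deriv (fun s => deriv (fun t => γ (s, t)) 0) 0 = 0 →
        (∀ s ∈ Set.Icc (0 : ℝ) R, ‖iteratedFDeriv ℝ 2 γ (s, 0)‖ ≤ M) →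
        0 < R → R ≤ 1 →
        (∀ s ∈ Set.Ioc (0 : ℝ) R, s / 2 ≤ ‖γ (s, 0) - γ (0, 0)‖) →
        |deriv (fun t => ‖γ (R, t) - γ (0, t)‖) 0| ≤ C * R ^ 2 := by
  refine ⟨4 * M ^ 2, by positivity, ?_⟩
  intro γ R hγ hγ0 hunit hv0 hw0 hbound hR0 hR1 hlow
  have hd : Differentiable ℝ γ := hγ.differentiable (by norm_num)
  have hDc : ContDiff ℝ 1 (fderiv ℝ γ) := hγ.fderiv_right (le_refl 2)
  have hDd : Differentiable ℝ (fderiv ℝ γ) := hDc.differentiable (by norm_num)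
  set D := fderiv ℝ γ with hDdef
  set D2 := fderiv ℝ D with hD2def
  -- derivatives of coordinate lines
  have hline_s : ∀ (s t : ℝ), HasDerivAt (fun s' : ℝ => (s', t)) ((1 : ℝ), (0 : ℝ)) s :=
    fun s t => (hasDerivAt_id s).prodMk (hasDerivAt_const s t)
  have hline_t : ∀ (s t : ℝ), HasDerivAt (fun t' : ℝ => (s, t')) ((0 : ℝ), (1 : ℝ)) t :=
    fun s t => (hasDerivAt_const t s).prodMk (hasDerivAt_id t)
  have hγs : ∀ s t : ℝ, HasDerivAt (fun s' => γ (s', t)) (D (s, t) (1, 0)) s :=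
    fun s t => (hd (s, t)).hasFDerivAt.comp_hasDerivAt s (hline_s s t)
  have hγt : ∀ s t : ℝ, HasDerivAt (fun t' => γ (s, t')) (D (s, t) (0, 1)) t :=
    fun s t => (hd (s, t)).hasFDerivAt.comp_hasDerivAt t (hline_t s t)
  have hDs : ∀ s : ℝ, HasDerivAt (fun s' => D (s', 0)) (D2 (s, 0) (1, 0)) s :=
    fun s => (hDd (s, 0)).hasFDerivAt.comp_hasDerivAt s (hline_s s 0)
  have hDt : ∀ s t : ℝ, HasDerivAt (fun t' => D (s, t')) (D2 (s, t) (0, 1)) t :=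
    fun s t => (hDd (s, t)).hasFDerivAt.comp_hasDerivAt t (hline_t s t)
  have happ : ∀ (c : ℝ × ℝ) (s : ℝ),
      HasDerivAt (fun s' => D (s', 0) c) (D2 (s, 0) (1, 0) c) s := by
    intro c s
    have := (hDs s).clm_apply (hasDerivAt_const s c)
    simpa using this
  have happt : ∀ (c : ℝ × ℝ) (s t : ℝ),
      HasDerivAt (fun t' => D (s, t') c) (D2 (s, t) (0, 1) c) t := by
    intro c s t
    have := (hDt s t).clm_apply (hasDerivAt_const t c)
    simpa using this
  -- norms of basis vectors
  have hn10 : ‖((1 : ℝ), (0 : ℝ))‖ = 1 := by simp [Prod.norm_def]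
  have hn01 : ‖((0 : ℝ), (1 : ℝ))‖ = 1 := by simp [Prod.norm_def]
  -- bound on second derivative applications
  have hDb : ∀ s ∈ Icc (0 : ℝ) R, ∀ v w : ℝ × ℝ, ‖v‖ = 1 → ‖w‖ = 1 →
      ‖D2 (s, 0) v w‖ ≤ M := by
    intro s hs v w hv hw
    have e : D2 (s, 0) v w = iteratedFDeriv ℝ 2 γ (s, 0) ![v, w] := by
      rw [hD2def, hDdef, iteratedFDeriv_two_apply]
      norm_num
    rw [e]
    calc ‖iteratedFDeriv ℝ 2 γ (s, 0) ![v, w]‖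
        ≤ ‖iteratedFDeriv ℝ 2 γ (s, 0)‖ * ∏ i, ‖![v, w] i‖ :=
          ContinuousMultilinearMap.le_opNorm _ _
      _ ≤ M := by rw [Fin.prod_univ_two]; simp [hv, hw]; exact hbound s hs
  -- symmetry of the second derivative
  have hsymm : ∀ (p : ℝ × ℝ) (v w : ℝ × ℝ), D2 p v w = D2 p w v :=
    fun p v w => (hγ.contDiffAt.isSymmSndFDerivAt (by simp)) v w
  -- reformulated hypotheses
  have hunit' : ∀ s t : ℝ, ‖D (s, t) (1, 0)‖ = 1 := by
    intro s t; rw [← (hγs s t).deriv]; exact hunit s t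
  have hv0' : D (0, 0) (0, 1) = 0 := by rw [← (hγt 0 0).deriv]; exact hv0
  have hw0' : D2 (0, 0) (1, 0) (0, 1) = 0 := by
    have e1 : (fun s : ℝ => deriv (fun t => γ (s, t)) 0) = fun s => D (s, 0) (0, 1) := by
      funext s; exact (hγt s 0).deriv
    rw [e1] at hw0
    rw [← (happ (0, 1) 0).deriv]; exact hw0
  -- orthogonality ⟪γ_s, γ_st⟫ = 0
  have horth : ∀ s : ℝ, ⟪D (s, 0) (1, 0), D2 (s, 0) (1, 0) (0, 1)⟫ = 0 := by
    intro s
    have h1 : HasDerivAt (fun t => (⟪D (s, t) (1, 0), D (s, t) (1, 0)⟫ : ℝ))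
        (⟪D (s, 0) (1, 0), D2 (s, 0) (0, 1) (1, 0)⟫ +
          ⟪D2 (s, 0) (0, 1) (1, 0), D (s, 0) (1, 0)⟫) 0 :=
      (happt (1, 0) s 0).inner ℝ (happt (1, 0) s 0)
    have h2 : (fun t => (⟪D (s, t) (1, 0), D (s, t) (1, 0)⟫ : ℝ)) = fun _ => 1 := by
      funext t
      rw [real_inner_self_eq_norm_mul_norm, hunit' s t, mul_one]
    have h3 := h1.deriv
    rw [h2, deriv_const] at h3
    have hcomm : ⟪D2 (s, 0) (0, 1) (1, 0), D (s, 0) (1, 0)⟫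
        = ⟪D (s, 0) (1, 0), D2 (s, 0) (0, 1) (1, 0)⟫ := real_inner_comm _ _
    have h4 : ⟪D (s, 0) (1, 0), D2 (s, 0) (0, 1) (1, 0)⟫ = 0 := by linarith
    rw [hsymm (s, 0) (1, 0) (0, 1)]
    exact h4
  -- bound ‖γ_t(s,0)‖ ≤ M s
  have hvb : ∀ s ∈ Icc (0 : ℝ) R, ‖D (s, 0) (0, 1)‖ ≤ M * s := by
    intro s hs
    have := norm_image_sub_le_of_norm_deriv_le_segment'
      (f := fun s' => D (s', 0) (0, 1)) (f' := fun s' => D2 (s', 0) (1, 0) (0, 1)) (C := M)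
      (fun x hx => (happ (0, 1) x).hasDerivWithinAt)
      (fun x hx => hDb x (Ico_subset_Icc_self hx) _ _ hn10 hn01) s hs
    have h0 : (fun s' : ℝ => D (s', 0) (0, 1)) 0 = 0 := hv0'
    calc ‖D (s, 0) (0, 1)‖
        = ‖(fun s' : ℝ => D (s', 0) (0, 1)) s - (fun s' : ℝ => D (s', 0) (0, 1)) 0‖ := by
          rw [h0, sub_zero]
      _ ≤ M * (s - 0) := this
      _ = M * s := by ring
  -- bound ‖γ(s,0) - s • γ_s(s,0)‖ ≤ M R s
  have hbb : ∀ s ∈ Icc (0 : ℝ) R, ‖γ (s, 0) - s • D (s, 0) (1, 0)‖ ≤ M * R * s := by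
    intro s hs
    have hder : ∀ x : ℝ, HasDerivAt (fun s' => γ (s', 0) - s' • D (s', 0) (1, 0))
        (-(x • D2 (x, 0) (1, 0) (1, 0))) x := by
      intro x
      have h1 : HasDerivAt (fun s' => γ (s', 0) - s' • D (s', 0) (1, 0))
          (D (x, 0) (1, 0) - (x • D2 (x, 0) (1, 0) (1, 0) + (1 : ℝ) • D (x, 0) (1, 0))) x :=
        (hγs x 0).sub ((hasDerivAt_id x).smul (happ (1, 0) x))
      convert h1 using 1
      simp
    have := norm_image_sub_le_of_norm_deriv_le_segment'
      (f := fun s' => γ (s', 0) - s' • D (s', 0) (1, 0))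
      (f' := fun x => -(x • D2 (x, 0) (1, 0) (1, 0))) (C := M * R)
      (fun x hx => (hder x).hasDerivWithinAt)
      (fun x hx => by
        rw [norm_neg, norm_smul, Real.norm_eq_abs, abs_of_nonneg hx.1]
        calc x * ‖D2 (x, 0) (1, 0) (1, 0)‖ ≤ R * M := by
              exact mul_le_mul hx.2.le (hDb x (Ico_subset_Icc_self hx) _ _ hn10 hn10)
                (norm_nonneg _) (le_of_lt hR0)
          _ = M * R := mul_comm _ _) s hs
    have h0 : (fun s' : ℝ => γ (s', 0) - s' • D (s', 0) (1, 0)) 0 = 0 := by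
      simp only [hγ0 0, zero_smul, sub_zero]
    calc ‖γ (s, 0) - s • D (s, 0) (1, 0)‖
        = ‖(fun s' : ℝ => γ (s', 0) - s' • D (s', 0) (1, 0)) s
            - (fun s' : ℝ => γ (s', 0) - s' • D (s', 0) (1, 0)) 0‖ := by rw [h0, sub_zero]
      _ ≤ M * R * (s - 0) := this
      _ = M * R * s := by ring
  -- bound |⟪γ_s, γ_t⟫| ≤ M² R s
  have hφb : ∀ s ∈ Icc (0 : ℝ) R, |⟪D (s, 0) (1, 0), D (s, 0) (0, 1)⟫| ≤ M * (M * R) * s := by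
    intro s hs
    have hder : ∀ x : ℝ, HasDerivAt (fun s' => (⟪D (s', 0) (1, 0), D (s', 0) (0, 1)⟫ : ℝ))
        (⟪D (x, 0) (1, 0), D2 (x, 0) (1, 0) (0, 1)⟫ +
          ⟪D2 (x, 0) (1, 0) (1, 0), D (x, 0) (0, 1)⟫) x :=
      fun x => (happ (1, 0) x).inner ℝ (happ (0, 1) x)
    have := norm_image_sub_le_of_norm_deriv_le_segment'
      (f := fun s' => (⟪D (s', 0) (1, 0), D (s', 0) (0, 1)⟫ : ℝ))
      (f' := fun x => ⟪D (x, 0) (1, 0), D2 (x, 0) (1, 0) (0, 1)⟫ +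
          ⟪D2 (x, 0) (1, 0) (1, 0), D (x, 0) (0, 1)⟫) (C := M * (M * R))
      (fun x hx => (hder x).hasDerivWithinAt)
      (fun x hx => by
        simp only [Real.norm_eq_abs, horth x, zero_add]
        calc |⟪D2 (x, 0) (1, 0) (1, 0), D (x, 0) (0, 1)⟫|
            ≤ ‖D2 (x, 0) (1, 0) (1, 0)‖ * ‖D (x, 0) (0, 1)‖ := abs_real_inner_le_norm _ _
          _ ≤ M * (M * R) := by
              apply mul_le_mul (hDb x (Ico_subset_Icc_self hx) _ _ hn10 hn10)
                (le_trans (hvb x (Ico_subset_Icc_self hx))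
                  (mul_le_mul_of_nonneg_left hx.2.le hM.le)) (norm_nonneg _) hM.le) s hs
    have h0 : (⟪D (0, 0) (1, 0), D (0, 0) (0, 1)⟫ : ℝ) = 0 := by
      rw [hv0', inner_zero_right]
    calc |(⟪D (s, 0) (1, 0), D (s, 0) (0, 1)⟫ : ℝ)|
        = ‖(fun s' : ℝ => (⟪D (s', 0) (1, 0), D (s', 0) (0, 1)⟫ : ℝ)) s
            - (fun s' : ℝ => (⟪D (s', 0) (1, 0), D (s', 0) (0, 1)⟫ : ℝ)) 0‖ := by
          simp only [h0, sub_zero, Real.norm_eq_abs]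
      _ ≤ M * (M * R) * (s - 0) := this
      _ = M * (M * R) * s := by ring
  -- bound |⟪γ(R,0), γ_t(R,0)⟫| ≤ 2 M² R² · R
  have hψb : |⟪γ (R, 0), D (R, 0) (0, 1)⟫| ≤ 2 * M ^ 2 * R ^ 2 * R := by
    have hder : ∀ x : ℝ, HasDerivAt (fun s' => (⟪γ (s', 0), D (s', 0) (0, 1)⟫ : ℝ))
        (⟪γ (x, 0), D2 (x, 0) (1, 0) (0, 1)⟫ +
          ⟪D (x, 0) (1, 0), D (x, 0) (0, 1)⟫) x :=
      fun x => (hγs x 0).inner ℝ (happ (0, 1) x)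
    have key := norm_image_sub_le_of_norm_deriv_le_segment'
      (f := fun s' => (⟪γ (s', 0), D (s', 0) (0, 1)⟫ : ℝ))
      (f' := fun x => ⟪γ (x, 0), D2 (x, 0) (1, 0) (0, 1)⟫ +
          ⟪D (x, 0) (1, 0), D (x, 0) (0, 1)⟫) (C := 2 * M ^ 2 * R ^ 2)
      (fun x hx => (hder x).hasDerivWithinAt)
      (fun x hx => by
        have hx' := Ico_subset_Icc_self hx
        have e : (⟪γ (x, 0), D2 (x, 0) (1, 0) (0, 1)⟫ : ℝ)
            = ⟪γ (x, 0) - x • D (x, 0) (1, 0), D2 (x, 0) (1, 0) (0, 1)⟫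
              + x * ⟪D (x, 0) (1, 0), D2 (x, 0) (1, 0) (0, 1)⟫ := by
          rw [inner_sub_left, real_inner_smul_left]; ring
        simp only [Real.norm_eq_abs]
        have h1 : |(⟪γ (x, 0), D2 (x, 0) (1, 0) (0, 1)⟫ : ℝ)| ≤ M ^ 2 * R ^ 2 := by
          rw [e, horth x, mul_zero, add_zero]
          calc |(⟪γ (x, 0) - x • D (x, 0) (1, 0), D2 (x, 0) (1, 0) (0, 1)⟫ : ℝ)|
              ≤ ‖γ (x, 0) - x • D (x, 0) (1, 0)‖ * ‖D2 (x, 0) (1, 0) (0, 1)‖ :=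
                abs_real_inner_le_norm _ _
            _ ≤ (M * R * x) * M :=
                mul_le_mul (hbb x hx') (hDb x hx' _ _ hn10 hn01) (norm_nonneg _)
                  (mul_nonneg (mul_nonneg hM.le hR0.le) hx.1)
            _ ≤ M ^ 2 * R ^ 2 := by nlinarith [hx.1, hx.2.le, hM.le, hR0.le,
                mul_le_mul_of_nonneg_left hx.2.le (mul_nonneg (mul_nonneg hM.le hR0.le) hM.le)]
        have h2 : |(⟪D (x, 0) (1, 0), D (x, 0) (0, 1)⟫ : ℝ)| ≤ M ^ 2 * R ^ 2 := by
          calc |(⟪D (x, 0) (1, 0), D (x, 0) (0, 1)⟫ : ℝ)| ≤ M * (M * R) * x := hφb x hx'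
            _ ≤ M ^ 2 * R ^ 2 := by nlinarith [hx.1, hx.2.le, hM.le, hR0.le,
                mul_le_mul_of_nonneg_left hx.2.le (mul_nonneg hM.le (mul_nonneg hM.le hR0.le))]
        calc |(⟪γ (x, 0), D2 (x, 0) (1, 0) (0, 1)⟫ : ℝ) + ⟪D (x, 0) (1, 0), D (x, 0) (0, 1)⟫|
            ≤ |(⟪γ (x, 0), D2 (x, 0) (1, 0) (0, 1)⟫ : ℝ)|
              + |(⟪D (x, 0) (1, 0), D (x, 0) (0, 1)⟫ : ℝ)| := abs_add_le _ _
          _ ≤ 2 * M ^ 2 * R ^ 2 := by linarith) R ⟨le_refl 0 |>.trans hR0.le, le_rfl⟩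
    have h0 : (⟪γ (0, 0), D (0, 0) (0, 1)⟫ : ℝ) = 0 := by
      rw [hγ0 0, inner_zero_left]
    calc |(⟪γ (R, 0), D (R, 0) (0, 1)⟫ : ℝ)|
        = ‖(fun s' : ℝ => (⟪γ (s', 0), D (s', 0) (0, 1)⟫ : ℝ)) R
            - (fun s' : ℝ => (⟪γ (s', 0), D (s', 0) (0, 1)⟫ : ℝ)) 0‖ := by
          simp only [h0, sub_zero, Real.norm_eq_abs]
      _ ≤ 2 * M ^ 2 * R ^ 2 * (R - 0) := key
      _ = 2 * M ^ 2 * R ^ 2 * R := by ring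
  -- the endpoint is away from the origin
  have haR : R / 2 ≤ ‖γ (R, 0)‖ := by
    have := hlow R ⟨hR0, le_rfl⟩
    rwa [hγ0 0, sub_zero] at this
  have haRpos : 0 < ‖γ (R, 0)‖ := lt_of_lt_of_le (by linarith) haR
  -- compute the derivative of the chordal distance
  have hq0 : (⟪γ (R, 0), γ (R, 0)⟫ : ℝ) ≠ 0 := by
    rw [real_inner_self_eq_norm_mul_norm]
    positivity
  have hq : HasDerivAt (fun t => (⟪γ (R, t), γ (R, t)⟫ : ℝ))
      (⟪γ (R, 0), D (R, 0) (0, 1)⟫ + ⟪D (R, 0) (0, 1), γ (R, 0)⟫) 0 :=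
    (hγt R 0).inner ℝ (hγt R 0)
  have hsq : HasDerivAt (fun t => Real.sqrt (⟪γ (R, t), γ (R, t)⟫ : ℝ))
      (1 / (2 * Real.sqrt (⟪γ (R, 0), γ (R, 0)⟫ : ℝ)) *
        (⟪γ (R, 0), D (R, 0) (0, 1)⟫ + ⟪D (R, 0) (0, 1), γ (R, 0)⟫)) 0 :=
    (Real.hasDerivAt_sqrt hq0).comp 0 hq
  have hfun : (fun t => ‖γ (R, t) - γ (0, t)‖)
      = fun t => Real.sqrt (⟪γ (R, t), γ (R, t)⟫ : ℝ) := by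
    funext t
    rw [hγ0 t, sub_zero, real_inner_self_eq_norm_mul_norm,
      Real.sqrt_mul_self (norm_nonneg _)]
  have key : deriv (fun t => ‖γ (R, t) - γ (0, t)‖) 0
      = ⟪γ (R, 0), D (R, 0) (0, 1)⟫ / ‖γ (R, 0)‖ := by
    rw [hfun, hsq.deriv, real_inner_self_eq_norm_mul_norm,
      Real.sqrt_mul_self (norm_nonneg _),
      real_inner_comm (D (R, 0) (0, 1)) (γ (R, 0))]
    field_simp
    ring
  rw [key, abs_div, abs_of_pos haRpos]
  calc |(⟪γ (R, 0), D (R, 0) (0, 1)⟫ : ℝ)| / ‖γ (R, 0)‖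
      ≤ (2 * M ^ 2 * R ^ 2 * R) / (R / 2) :=
        div_le_div₀ (by positivity) hψb (by linarith) haR
    _ = 4 * M ^ 2 * R ^ 2 := by field_simp; ring
end

section
/- Let e, f, d : ℝ → ℝ be differentiable, L > 0, C₀ > 0, and suppose for all t: |d(t)| ≥ L/C₀, |e(t)| ≤ C₀·L, |f(t)| ≥ L/C₀, |d'(t)| ≤ C₀·L², |d/dt √(e(t)² + f(t)²)| ≤ C₀·L², and |d/dt √((e(t)−d(t))² + f(t)²)| ≤ C₀·L² (with both square roots bounded below by L/C₀ and above by C₀·L). Then there is a constant C₁ depending only on C₀ with |e'(t)| ≤ C₁·L² and |f'(t)| ≤ C₁·L² for all t. -/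
theorem planar_vertex_coordinate_derivative_bounds (C₀ : ℝ) (hC₀ : 0 < C₀) :
    ∃ C₁ : ℝ, 0 < C₁ ∧
      ∀ (e f d : ℝ → ℝ) (L : ℝ), 0 < L →
        Differentiable ℝ e → Differentiable ℝ f → Differentiable ℝ d →
        (∀ t, L / C₀ ≤ |d t|) →
        (∀ t, |e t| ≤ C₀ * L) →
        (∀ t, L / C₀ ≤ |f t|) →
        (∀ t, |deriv d t| ≤ C₀ * L ^ 2) →
        (∀ t, |deriv (fun t => Real.sqrt (e t ^ 2 + f t ^ 2)) t| ≤ C₀ * L ^ 2) →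
        (∀ t, |deriv (fun t => Real.sqrt ((e t - d t) ^ 2 + f t ^ 2)) t| ≤ C₀ * L ^ 2) →
        (∀ t, L / C₀ ≤ Real.sqrt (e t ^ 2 + f t ^ 2) ∧
          Real.sqrt (e t ^ 2 + f t ^ 2) ≤ C₀ * L) →
        (∀ t, L / C₀ ≤ Real.sqrt ((e t - d t) ^ 2 + f t ^ 2) ∧
          Real.sqrt ((e t - d t) ^ 2 + f t ^ 2) ≤ C₀ * L) →
        ∀ t, |deriv e t| ≤ C₁ * L ^ 2 ∧ |deriv f t| ≤ C₁ * L ^ 2 := by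
  refine ⟨4 * C₀ ^ 5 + 4 * C₀ ^ 3 + 1, by positivity, ?_⟩
  intro e f d L hL he hf hd hdlb heub hflb hd' hr1' hr2' hr1 hr2 t
  have hLC : (0 : ℝ) < L / C₀ := by positivity
  -- the first radicand is nonzero
  have hu1 : DifferentiableAt ℝ (fun t => e t ^ 2 + f t ^ 2) t :=
    ((he t).pow 2).add ((hf t).pow 2)
  have hu2 : DifferentiableAt ℝ (fun t => (e t - d t) ^ 2 + f t ^ 2) t :=
    (((he t).sub (hd t)).pow 2).add ((hf t).pow 2)
  have h1ne : e t ^ 2 + f t ^ 2 ≠ 0 := by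
    intro h
    have := (hr1 t).1
    rw [h, Real.sqrt_zero] at this
    linarith
  have h2ne : (e t - d t) ^ 2 + f t ^ 2 ≠ 0 := by
    intro h
    have := (hr2 t).1
    rw [h, Real.sqrt_zero] at this
    linarith
  have hs1pos : 0 < Real.sqrt (e t ^ 2 + f t ^ 2) := lt_of_lt_of_le hLC (hr1 t).1
  have hs2pos : 0 < Real.sqrt ((e t - d t) ^ 2 + f t ^ 2) := lt_of_lt_of_le hLC (hr2 t).1
  -- derivative formulas
  have hder1 : deriv (fun t => Real.sqrt (e t ^ 2 + f t ^ 2)) t =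
      deriv (fun t => e t ^ 2 + f t ^ 2) t / (2 * Real.sqrt (e t ^ 2 + f t ^ 2)) :=
    deriv_sqrt hu1 h1ne
  have hder2 : deriv (fun t => Real.sqrt ((e t - d t) ^ 2 + f t ^ 2)) t =
      deriv (fun t => (e t - d t) ^ 2 + f t ^ 2) t /
        (2 * Real.sqrt ((e t - d t) ^ 2 + f t ^ 2)) :=
    deriv_sqrt hu2 h2ne
  have hderu1 : deriv (fun t => e t ^ 2 + f t ^ 2) t =
      2 * e t * deriv e t + 2 * f t * deriv f t := by
    rw [deriv_fun_add ((he t).fun_pow 2) ((hf t).fun_pow 2), deriv_fun_pow (he t) 2,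
      deriv_fun_pow (hf t) 2]
    ring
  have hderu2 : deriv (fun t => (e t - d t) ^ 2 + f t ^ 2) t =
      2 * (e t - d t) * (deriv e t - deriv d t) + 2 * f t * deriv f t := by
    rw [deriv_fun_add (((he t).fun_sub (hd t)).fun_pow 2) ((hf t).fun_pow 2),
      deriv_fun_pow ((he t).fun_sub (hd t)) 2, deriv_fun_sub (he t) (hd t), deriv_fun_pow (hf t) 2]
    ring
  set E := e t
  set F := f t
  set D := d t
  set E' := deriv e t
  set F' := deriv f t
  set D' := deriv d t
  set S₁ := Real.sqrt (E ^ 2 + F ^ 2) with hS1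
  set S₂ := Real.sqrt ((E - D) ^ 2 + F ^ 2) with hS2
  -- key identities: S₁ * (deriv sqrt) = E E' + F F'
  have hA : E * E' + F * F' = S₁ * deriv (fun t => Real.sqrt (e t ^ 2 + f t ^ 2)) t := by
    rw [hder1, hderu1]
    field_simp
  have hB : (E - D) * (E' - D') + F * F' =
      S₂ * deriv (fun t => Real.sqrt ((e t - d t) ^ 2 + f t ^ 2)) t := by
    rw [hder2, hderu2]
    field_simp
  have hAbd : |E * E' + F * F'| ≤ C₀ ^ 2 * L ^ 3 := by
    rw [hA, abs_mul, abs_of_pos hs1pos]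
    calc S₁ * |deriv (fun t => Real.sqrt (e t ^ 2 + f t ^ 2)) t| ≤
        (C₀ * L) * (C₀ * L ^ 2) :=
          mul_le_mul (hr1 t).2 (hr1' t) (abs_nonneg _) (by positivity)
      _ = C₀ ^ 2 * L ^ 3 := by ring
  have hBbd : |(E - D) * (E' - D') + F * F'| ≤ C₀ ^ 2 * L ^ 3 := by
    rw [hB, abs_mul, abs_of_pos hs2pos]
    calc S₂ * |deriv (fun t => Real.sqrt ((e t - d t) ^ 2 + f t ^ 2)) t| ≤
        (C₀ * L) * (C₀ * L ^ 2) :=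
          mul_le_mul (hr2 t).2 (hr2' t) (abs_nonneg _) (by positivity)
      _ = C₀ ^ 2 * L ^ 3 := by ring
  -- |E - D| ≤ C₀ L
  have hEDbd : |E - D| ≤ C₀ * L := by
    have hsq : S₂ ^ 2 = (E - D) ^ 2 + F ^ 2 := Real.sq_sqrt (by positivity)
    have h2 : S₂ ≤ C₀ * L := (hr2 t).2
    have h1 : (E - D) ^ 2 ≤ (C₀ * L) ^ 2 := by nlinarith [sq_nonneg F, hs2pos.le]
    rw [← Real.sqrt_sq_eq_abs]
    exact (Real.sqrt_le_sqrt h1).trans_eq (Real.sqrt_sq (by positivity))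
  -- bound on D * E'
  have hDE' : |D * E'| ≤ 3 * C₀ ^ 2 * L ^ 3 := by
    have hid : D * E' = (E * E' + F * F') - ((E - D) * (E' - D') + F * F')
        - (E - D) * D' := by ring
    rw [hid]
    calc |(E * E' + F * F') - ((E - D) * (E' - D') + F * F') - (E - D) * D'|
        ≤ |(E * E' + F * F') - ((E - D) * (E' - D') + F * F')| + |(E - D) * D'| :=
          abs_sub _ _
      _ ≤ |E * E' + F * F'| + |(E - D) * (E' - D') + F * F'| + |(E - D) * D'| := by
          have := abs_sub (E * E' + F * F') ((E - D) * (E' - D') + F * F')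
          linarith
      _ ≤ C₀ ^ 2 * L ^ 3 + C₀ ^ 2 * L ^ 3 + (C₀ * L) * (C₀ * L ^ 2) := by
          have : |(E - D) * D'| ≤ (C₀ * L) * (C₀ * L ^ 2) := by
            rw [abs_mul]
            exact mul_le_mul hEDbd (hd' t) (abs_nonneg _) (by positivity)
          linarith
      _ = 3 * C₀ ^ 2 * L ^ 3 := by ring
  -- |E'| ≤ 3 C₀³ L²
  have hE' : |E'| ≤ 3 * C₀ ^ 3 * L ^ 2 := by
    have h1 : |E'| * (L / C₀) ≤ |D * E'| := by
      rw [abs_mul]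
      calc |E'| * (L / C₀) ≤ |E'| * |D| :=
            mul_le_mul_of_nonneg_left (hdlb t) (abs_nonneg _)
        _ = |D| * |E'| := mul_comm _ _
    have h2 : |E'| * (L / C₀) ≤ 3 * C₀ ^ 2 * L ^ 3 := h1.trans hDE'
    have h3 : |E'| ≤ 3 * C₀ ^ 2 * L ^ 3 / (L / C₀) := (le_div_iff₀ hLC).mpr h2
    calc |E'| ≤ 3 * C₀ ^ 2 * L ^ 3 / (L / C₀) := h3
      _ = 3 * C₀ ^ 3 * L ^ 2 := by field_simp
  -- |F F'| bound
  have hFF' : |F * F'| ≤ (C₀ ^ 2 + 3 * C₀ ^ 4) * L ^ 3 := by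
    have hid : F * F' = (E * E' + F * F') - E * E' := by ring
    rw [hid]
    calc |(E * E' + F * F') - E * E'| ≤ |E * E' + F * F'| + |E * E'| := abs_sub _ _
      _ ≤ C₀ ^ 2 * L ^ 3 + (C₀ * L) * (3 * C₀ ^ 3 * L ^ 2) := by
          have : |E * E'| ≤ (C₀ * L) * (3 * C₀ ^ 3 * L ^ 2) := by
            rw [abs_mul]
            exact mul_le_mul (heub t) hE' (abs_nonneg _) (by positivity)
          linarith
      _ = (C₀ ^ 2 + 3 * C₀ ^ 4) * L ^ 3 := by ring
  have hF' : |F'| ≤ (C₀ ^ 3 + 3 * C₀ ^ 5) * L ^ 2 := by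
    have h1 : |F'| * (L / C₀) ≤ |F * F'| := by
      rw [abs_mul]
      calc |F'| * (L / C₀) ≤ |F'| * |F| :=
            mul_le_mul_of_nonneg_left (hflb t) (abs_nonneg _)
        _ = |F| * |F'| := mul_comm _ _
    have h2 : |F'| * (L / C₀) ≤ (C₀ ^ 2 + 3 * C₀ ^ 4) * L ^ 3 := h1.trans hFF'
    have h3 : |F'| ≤ (C₀ ^ 2 + 3 * C₀ ^ 4) * L ^ 3 / (L / C₀) := (le_div_iff₀ hLC).mpr h2
    calc |F'| ≤ (C₀ ^ 2 + 3 * C₀ ^ 4) * L ^ 3 / (L / C₀) := h3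
      _ = (C₀ ^ 3 + 3 * C₀ ^ 5) * L ^ 2 := by field_simp
  constructor
  · calc |E'| ≤ 3 * C₀ ^ 3 * L ^ 2 := hE'
      _ ≤ (4 * C₀ ^ 5 + 4 * C₀ ^ 3 + 1) * L ^ 2 := mul_le_mul_of_nonneg_right (by linarith [pow_pos hC₀ 5, pow_pos hC₀ 3]) (by positivity)
  · calc |F'| ≤ (C₀ ^ 3 + 3 * C₀ ^ 5) * L ^ 2 := hF'
      _ ≤ (4 * C₀ ^ 5 + 4 * C₀ ^ 3 + 1) * L ^ 2 := mul_le_mul_of_nonneg_right (by linarith [pow_pos hC₀ 5, pow_pos hC₀ 3]) (by positivity)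
end

section
/- Let a, b, c, d : ℝ → ℝ be differentiable, L, C₀ > 0, with for all t: |d(t)| ≥ L/C₀, |d'(t)| ≤ C₀·L², |a(t)| ≤ C₀·L, |b(t)| ≤ C₀·L, |c(t)| ≤ C₀·L², |c'(t)| ≤ C₀·L, |b(t)| ≥ L/C₀, |d/dt √(a²+b²+c²)| ≤ C₀·L², and |d/dt √((a−d)²+b²+c²)| ≤ C₀·L² (with both roots in [L/C₀, C₀·L]). Then there is C₁ depending only on C₀ such that |a'(t)| ≤ C₁·L² and |b'(t)| ≤ C₁·L² for all t. -/
set_option maxHeartbeats 1000000 in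
theorem offplane_vertex_coordinate_derivative_bounds (C₀ : ℝ) (hC₀ : 0 < C₀) :
    ∃ C₁ : ℝ, 0 < C₁ ∧
      ∀ (a b c d : ℝ → ℝ) (L : ℝ), 0 < L →
        Differentiable ℝ a → Differentiable ℝ b → Differentiable ℝ c →
        Differentiable ℝ d →
        (∀ t, L / C₀ ≤ |d t|) →
        (∀ t, |deriv d t| ≤ C₀ * L ^ 2) →
        (∀ t, |a t| ≤ C₀ * L) →
        (∀ t, |b t| ≤ C₀ * L) →
        (∀ t, |c t| ≤ C₀ * L ^ 2) →
        (∀ t, |deriv c t| ≤ C₀ * L) →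
        (∀ t, L / C₀ ≤ |b t|) →
        (∀ t, |deriv (fun t => Real.sqrt (a t ^ 2 + b t ^ 2 + c t ^ 2)) t|
          ≤ C₀ * L ^ 2) →
        (∀ t, |deriv (fun t => Real.sqrt ((a t - d t) ^ 2 + b t ^ 2 + c t ^ 2)) t|
          ≤ C₀ * L ^ 2) →
        (∀ t, L / C₀ ≤ Real.sqrt (a t ^ 2 + b t ^ 2 + c t ^ 2) ∧
          Real.sqrt (a t ^ 2 + b t ^ 2 + c t ^ 2) ≤ C₀ * L) →
        (∀ t, L / C₀ ≤ Real.sqrt ((a t - d t) ^ 2 + b t ^ 2 + c t ^ 2) ∧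
          Real.sqrt ((a t - d t) ^ 2 + b t ^ 2 + c t ^ 2) ≤ C₀ * L) →
        ∀ t, |deriv a t| ≤ C₁ * L ^ 2 ∧ |deriv b t| ≤ C₁ * L ^ 2 := by
  refine ⟨3 * C₀ ^ 3 + 2 * C₀ ^ 3 + 3 * C₀ ^ 5 + 1, by positivity, ?_⟩
  intro a b c d L hL ha hb hc hd hdlow hd' haB hbB hcB hc' hblow hr1 hr2 hs1 hs2 t
  have hLC : 0 < L / C₀ := div_pos hL hC₀
  have hA := (ha t).hasDerivAt
  have hB := (hb t).hasDerivAt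
  have hC := (hc t).hasDerivAt
  have hD := (hd t).hasDerivAt
  set a' := deriv a t
  set b' := deriv b t
  set c' := deriv c t
  set d' := deriv d t
  -- first sqrt
  have hS1 := (hs1 t).1
  have hS1' := (hs1 t).2
  have hS2 := (hs2 t).1
  have hS2' := (hs2 t).2
  have hS1pos : 0 < Real.sqrt (a t ^ 2 + b t ^ 2 + c t ^ 2) := lt_of_lt_of_le hLC hS1
  have hS2pos : 0 < Real.sqrt ((a t - d t) ^ 2 + b t ^ 2 + c t ^ 2) :=
    lt_of_lt_of_le hLC hS2
  have hf1 : HasDerivAt (fun s => a s ^ 2 + b s ^ 2 + c s ^ 2)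
      (2 * a t * a' + 2 * b t * b' + 2 * c t * c') t := by
    have := (hA.pow 2).add ((hB.pow 2).add (hC.pow 2))
    have e : (fun s => a s ^ 2 + b s ^ 2 + c s ^ 2) = a ^ 2 + (b ^ 2 + c ^ 2) := by
      funext s; simp only [Pi.add_apply, Pi.pow_apply]; ring
    rw [e]; exact this.congr_deriv (by norm_num; ring)
  have hf2 : HasDerivAt (fun s => (a s - d s) ^ 2 + b s ^ 2 + c s ^ 2)
      (2 * (a t - d t) * (a' - d') + 2 * b t * b' + 2 * c t * c') t := by
    have := ((hA.sub hD).pow 2).add ((hB.pow 2).add (hC.pow 2))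
    have e : (fun s => (a s - d s) ^ 2 + b s ^ 2 + c s ^ 2) = (a - d) ^ 2 + (b ^ 2 + c ^ 2) := by
      funext s; simp only [Pi.add_apply, Pi.pow_apply, Pi.sub_apply]; ring
    rw [e]; exact this.congr_deriv (by norm_num; ring)
  have hne1 : a t ^ 2 + b t ^ 2 + c t ^ 2 ≠ 0 := by
    intro h
    rw [h, Real.sqrt_zero] at hS1pos; exact lt_irrefl 0 hS1pos
  have hne2 : (a t - d t) ^ 2 + b t ^ 2 + c t ^ 2 ≠ 0 := by
    intro h
    rw [h, Real.sqrt_zero] at hS2pos; exact lt_irrefl 0 hS2pos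
  have hds1 := (hf1.sqrt hne1).deriv
  have hds2 := (hf2.sqrt hne2).deriv
  have key1 : |a t * a' + b t * b' + c t * c'| ≤ C₀ ^ 2 * L ^ 3 := by
    have hr1 := hr1 t
    rw [hds1, abs_div] at hr1
    have h2S : |2 * Real.sqrt (a t ^ 2 + b t ^ 2 + c t ^ 2)| =
        2 * Real.sqrt (a t ^ 2 + b t ^ 2 + c t ^ 2) := abs_of_pos (by linarith)
    rw [h2S, div_le_iff₀ (by linarith)] at hr1
    have habs : |2 * a t * a' + 2 * b t * b' + 2 * c t * c'| =
        2 * |a t * a' + b t * b' + c t * c'| := by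
      rw [show (2:ℝ) * a t * a' + 2 * b t * b' + 2 * c t * c'
          = 2 * (a t * a' + b t * b' + c t * c') by ring, abs_mul, abs_two]
    rw [habs] at hr1
    nlinarith [abs_nonneg (a t * a' + b t * b' + c t * c'), sq_nonneg L,
      mul_pos hC₀ hL]
  have key2 : |(a t - d t) * (a' - d') + b t * b' + c t * c'| ≤ C₀ ^ 2 * L ^ 3 := by
    have hr2 := hr2 t
    rw [hds2, abs_div] at hr2
    have h2S : |2 * Real.sqrt ((a t - d t) ^ 2 + b t ^ 2 + c t ^ 2)| =
        2 * Real.sqrt ((a t - d t) ^ 2 + b t ^ 2 + c t ^ 2) := abs_of_pos (by linarith)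
    rw [h2S, div_le_iff₀ (by linarith)] at hr2
    have habs : |2 * (a t - d t) * (a' - d') + 2 * b t * b' + 2 * c t * c'| =
        2 * |(a t - d t) * (a' - d') + b t * b' + c t * c'| := by
      rw [show (2:ℝ) * (a t - d t) * (a' - d') + 2 * b t * b' + 2 * c t * c'
          = 2 * ((a t - d t) * (a' - d') + b t * b' + c t * c') by ring, abs_mul,
        abs_two]
    rw [habs] at hr2
    nlinarith [abs_nonneg ((a t - d t) * (a' - d') + b t * b' + c t * c'),
      mul_pos hC₀ hL]
  -- |a - d| ≤ C₀ L
  have had : |a t - d t| ≤ C₀ * L := by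
    have h1 : |a t - d t| = Real.sqrt ((a t - d t) ^ 2) := (Real.sqrt_sq_eq_abs _).symm
    rw [h1]
    refine le_trans (Real.sqrt_le_sqrt ?_) hS2'
    nlinarith [sq_nonneg (b t), sq_nonneg (c t)]
  -- combine to bound d t * a'
  have hda : |d t * a'| ≤ 3 * C₀ ^ 2 * L ^ 3 := by
    have heq : d t * a' = (a t * a' + b t * b' + c t * c')
        - ((a t - d t) * (a' - d') + b t * b' + c t * c') - (a t - d t) * d' := by ring
    rw [heq]
    have h3 : |(a t - d t) * d'| ≤ C₀ * L * (C₀ * L ^ 2) := by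
      rw [abs_mul]
      exact mul_le_mul had (hd' t) (abs_nonneg _) (by positivity)
    calc |(a t * a' + b t * b' + c t * c')
        - ((a t - d t) * (a' - d') + b t * b' + c t * c') - (a t - d t) * d'|
        ≤ |(a t * a' + b t * b' + c t * c')
          - ((a t - d t) * (a' - d') + b t * b' + c t * c')| + |(a t - d t) * d'| :=
          abs_sub _ _
      _ ≤ (|a t * a' + b t * b' + c t * c'|
          + |(a t - d t) * (a' - d') + b t * b' + c t * c'|) + |(a t - d t) * d'| := by
          gcongr; exact abs_sub _ _
      _ ≤ (C₀ ^ 2 * L ^ 3 + C₀ ^ 2 * L ^ 3) + C₀ * L * (C₀ * L ^ 2) := by gcongr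
      _ = 3 * C₀ ^ 2 * L ^ 3 := by ring
  have ha' : |a'| ≤ 3 * C₀ ^ 3 * L ^ 2 := by
    have h1 : L / C₀ * |a'| ≤ |d t| * |a'| :=
      mul_le_mul_of_nonneg_right (hdlow t) (abs_nonneg _)
    rw [← abs_mul] at h1
    have h2 : L / C₀ * |a'| ≤ 3 * C₀ ^ 2 * L ^ 3 := le_trans h1 hda
    rw [div_mul_eq_mul_div, div_le_iff₀ hC₀] at h2
    nlinarith [abs_nonneg a']
  have hbb' : |b t * b'| ≤ (C₀ ^ 2 + 3 * C₀ ^ 4 + C₀ ^ 2) * L ^ 3 := by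
    have heq : b t * b' = (a t * a' + b t * b' + c t * c') - a t * a' - c t * c' := by
      ring
    rw [heq]
    have h2 : |a t * a'| ≤ C₀ * L * (3 * C₀ ^ 3 * L ^ 2) := by
      rw [abs_mul]; exact mul_le_mul (haB t) ha' (abs_nonneg _) (by positivity)
    have h3 : |c t * c'| ≤ C₀ * L ^ 2 * (C₀ * L) := by
      rw [abs_mul]; exact mul_le_mul (hcB t) (hc' t) (abs_nonneg _) (by positivity)
    calc |(a t * a' + b t * b' + c t * c') - a t * a' - c t * c'|
        ≤ |(a t * a' + b t * b' + c t * c') - a t * a'| + |c t * c'| := abs_sub _ _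
      _ ≤ (|a t * a' + b t * b' + c t * c'| + |a t * a'|) + |c t * c'| := by
          gcongr; exact abs_sub _ _
      _ ≤ (C₀ ^ 2 * L ^ 3 + C₀ * L * (3 * C₀ ^ 3 * L ^ 2)) + C₀ * L ^ 2 * (C₀ * L) := by
          gcongr
      _ = (C₀ ^ 2 + 3 * C₀ ^ 4 + C₀ ^ 2) * L ^ 3 := by ring
  have hb' : |b'| ≤ (2 * C₀ ^ 3 + 3 * C₀ ^ 5) * L ^ 2 := by
    have h1 : L / C₀ * |b'| ≤ |b t| * |b'| :=
      mul_le_mul_of_nonneg_right (hblow t) (abs_nonneg _)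
    rw [← abs_mul] at h1
    have h2 : L / C₀ * |b'| ≤ (C₀ ^ 2 + 3 * C₀ ^ 4 + C₀ ^ 2) * L ^ 3 := le_trans h1 hbb'
    rw [div_mul_eq_mul_div, div_le_iff₀ hC₀] at h2
    nlinarith [abs_nonneg b']
  constructor
  · refine le_trans ha' ?_
    have : (0:ℝ) ≤ L ^ 2 := sq_nonneg L
    nlinarith [pow_pos hC₀ 3, pow_pos hC₀ 5]
  · refine le_trans hb' ?_
    have : (0:ℝ) ≤ L ^ 2 := sq_nonneg L
    nlinarith [pow_pos hC₀ 3, pow_pos hC₀ 5]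
end
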